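/- Let G be a strongly connected directed simple graph on a finite vertex type V with |V| ≥ 2. Then G is minimally strongly connected — i.e. for every pair (a,b) with E a b, the relation E' defined by E' x y ↔ (E x y ∧ ¬(x = a ∧ y = b)) is not strongly connected — if and only if no ear decomposition of G contains a trivial ear, i.e. in every ear decomposition of G each step adds a nontrivial ear. -/

import Mathlib

variable {V : Type*}

variable {V : Type*}

/-- The set of consecutive pairs of a list: the edges of the path it traces. -/
def chainPairs (L : List V) : Set (V × V) := {e | e ∈ L.zip L.tail}

/-- Adding a nontrivial ear: new distinct vertices `w₁, …, w_s` (`s ≥ 1`) outside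
the current vertex set, attached by the path `k → w₁ → ⋯ → w_s → l` with
`k, l` in the current vertex set, all of whose edges are edges of `G`. -/
def IsEarStep (E : V → V → Prop) (p q : Set V × Set (V × V)) : Prop :=
  ∃ (k l : V) (ws : List V), ws ≠ [] ∧ ws.Nodup ∧ k ∈ p.1 ∧ l ∈ p.1 ∧
    (∀ w ∈ ws, w ∉ p.1) ∧
    (∀ e ∈ chainPairs (k :: ws ++ [l]), E e.1 e.2) ∧
    q.1 = p.1 ∪ {x | x ∈ ws} ∧ q.2 = p.2 ∪ chainPairs (k :: ws ++ [l])

/-- Adding a trivial ear: a single new edge `k → l` of `G` between vertices of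
the current vertex set. -/
def IsTrivialEarStep (E : V → V → Prop) (p q : Set V × Set (V × V)) : Prop :=
  ∃ k l : V, k ∈ p.1 ∧ l ∈ p.1 ∧ E k l ∧ (k, l) ∉ p.2 ∧
    q.1 = p.1 ∧ q.2 = p.2 ∪ {(k, l)}

/-- A directed cycle of `G` through the vertex `r`, with at least two vertices,
recorded as a pair (vertex set, edge set). -/
def IsCycleAt (E : V → V → Prop) (r : V) (p : Set V × Set (V × V)) : Prop :=
  ∃ vs : List V, vs ≠ [] ∧ (r :: vs).Nodup ∧
    (∀ e ∈ chainPairs (r :: vs ++ [r]), E e.1 e.2) ∧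
    p.1 = {x | x ∈ r :: vs} ∧ p.2 = chainPairs (r :: vs ++ [r])

/-- A nontrivial ear decomposition of `G` rooted at `r`: a sequence of pairs
(vertex set, edge set), starting with a cycle through `r`, each obtained from
the previous one by adding a nontrivial ear, and ending with all of `G`. -/
def HasNontrivialEarDecomp (E : V → V → Prop) (r : V) : Prop :=
  ∃ (t : ℕ) (P : Fin (t + 1) → Set V × Set (V × V)),
    IsCycleAt E r (P 0) ∧
    (∀ i : Fin t, IsEarStep E (P i.castSucc) (P i.succ)) ∧
    (P (Fin.last t)).1 = Set.univ ∧ (P (Fin.last t)).2 = {e : V × V | E e.1 e.2}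

lemma mem_chainPairs_cons_cons {a b : V} {L : List V} {e : V × V} :
    e ∈ chainPairs (a :: b :: L) ↔ e = (a, b) ∨ e ∈ chainPairs (b :: L) := by
  simp [chainPairs]

lemma chainPairs_singleton (a : V) : chainPairs [a] = ∅ := by simp [chainPairs]

lemma reaches_getLast :
    ∀ (M : List V) (h : M ≠ []) (u : V), u ∈ M →
      Relation.ReflTransGen (fun a b => (a, b) ∈ chainPairs M) u (M.getLast h) := by
  intro M
  induction M with
  | nil => intro h; exact absurd rfl h
  | cons a M ih =>
    intro h u hu
    cases M with
    | nil =>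
      simp at hu; subst hu; exact Relation.ReflTransGen.refl
    | cons b M =>
      have hM : (b :: M) ≠ [] := by simp
      have hlast : (a :: b :: M).getLast h = (b :: M).getLast hM := List.getLast_cons hM
      rw [hlast]
      have mono : ∀ x y, (x, y) ∈ chainPairs (b :: M) → (x, y) ∈ chainPairs (a :: b :: M) :=
        fun x y hxy => mem_chainPairs_cons_cons.2 (Or.inr hxy)
      rcases List.mem_cons.1 hu with rfl | hu'
      · exact (Relation.ReflTransGen.single (mem_chainPairs_cons_cons.2 (Or.inl rfl))).trans
          (Relation.ReflTransGen.mono (fun x y => mono x y) _ _ (ih hM b (by simp)))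
      · exact Relation.ReflTransGen.mono (fun x y => mono x y) _ _ (ih hM u hu')

lemma head_reaches :
    ∀ (M : List V) (a : V) (u : V), u ∈ a :: M →
      Relation.ReflTransGen (fun x y => (x, y) ∈ chainPairs (a :: M)) a u := by
  intro M
  induction M with
  | nil => intro a u hu; simp at hu; subst hu; exact Relation.ReflTransGen.refl
  | cons b M ih =>
    intro a u hu
    rcases List.mem_cons.1 hu with rfl | hu'
    · exact Relation.ReflTransGen.refl
    · have mono : ∀ x y, (x, y) ∈ chainPairs (b :: M) → (x, y) ∈ chainPairs (a :: b :: M) :=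
        fun x y hxy => mem_chainPairs_cons_cons.2 (Or.inr hxy)
      exact (Relation.ReflTransGen.single (mem_chainPairs_cons_cons.2 (Or.inl rfl))).trans
        (Relation.ReflTransGen.mono (fun x y => mono x y) _ _ (ih b u hu'))

def InvF (E : V → V → Prop) (p : Set V × Set (V × V)) : Prop :=
  (∀ e ∈ p.2, E e.1 e.2) ∧
    ∀ u ∈ p.1, ∀ w ∈ p.1, Relation.ReflTransGen (fun x y => (x, y) ∈ p.2) u w

lemma invF_of_cycle {E : V → V → Prop} {r : V} {p : Set V × Set (V × V)}
    (h : IsCycleAt E r p) : InvF E p := by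
  obtain ⟨vs, hne, hnd, hE, h1, h2⟩ := h
  constructor
  · intro e he; exact hE e (h2 ▸ he)
  · intro u hu w hw
    rw [h1] at hu hw
    rw [h2]
    have hMne : (r :: vs ++ [r]) ≠ [] := by simp
    have hlast : (r :: vs ++ [r]).getLast hMne = r := by
      have h' := List.getLast?_eq_getLast (l := r :: vs ++ [r]) hMne
      have h2' : (r :: vs ++ [r]).getLast? = some r := by
        rw [show (r :: vs ++ [r]) = (r :: vs) ++ [r] by simp, List.getLast?_concat]
      rw [h2'] at h'
      exact (Option.some.inj h').symm
    have h1' : Relation.ReflTransGen (fun x y => (x, y) ∈ chainPairs (r :: vs ++ [r])) u r := by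
      have := reaches_getLast (r :: vs ++ [r]) hMne u (by
        rcases List.mem_cons.1 hu with rfl | hu' <;> simp_all)
      rwa [hlast] at this
    have h2' : Relation.ReflTransGen (fun x y => (x, y) ∈ chainPairs (r :: vs ++ [r])) r w := by
      exact head_reaches (vs ++ [r]) r w (by
        rcases List.mem_cons.1 hw with rfl | hw' <;> simp_all)
    exact h1'.trans h2'

lemma invF_earStep {E : V → V → Prop} {p q : Set V × Set (V × V)}
    (hp : InvF E p) (h : IsEarStep E p q) : InvF E q := by
  obtain ⟨k, l, ws, hne, hnd, hk, hl, hout, hE, h1, h2⟩ := h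
  constructor
  · intro e he
    rw [h2] at he
    rcases he with he | he
    · exact hp.1 e he
    · exact hE e he
  · have mono : ∀ x y, (x, y) ∈ p.2 → (x, y) ∈ q.2 := by
      intro x y hxy; rw [h2]; exact Or.inl hxy
    have monoL : ∀ x y, (x, y) ∈ chainPairs (k :: ws ++ [l]) → (x, y) ∈ q.2 := by
      intro x y hxy; rw [h2]; exact Or.inr hxy
    have reachP : ∀ u ∈ p.1, ∀ w ∈ p.1, Relation.ReflTransGen (fun x y => (x, y) ∈ q.2) u w :=
      fun u hu w hw => Relation.ReflTransGen.mono (fun x y => mono x y) _ _ (hp.2 u hu w hw)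
    have hMne : (k :: ws ++ [l]) ≠ [] := by simp
    have hlast : (k :: ws ++ [l]).getLast hMne = l := by
      have h' := List.getLast?_eq_getLast (l := k :: ws ++ [l]) hMne
      have h2' : (k :: ws ++ [l]).getLast? = some l := by
        rw [show (k :: ws ++ [l]) = (k :: ws) ++ [l] by simp, List.getLast?_concat]
      rw [h2'] at h'
      exact (Option.some.inj h').symm
    have toL : ∀ u ∈ ws, Relation.ReflTransGen (fun x y => (x, y) ∈ q.2) u l := by
      intro u hu
      have := Relation.ReflTransGen.mono
        (fun x y => monoL x y) _ _ (reaches_getLast (k :: ws ++ [l]) hMne u (by simp [hu]))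
      rwa [hlast] at this
    have fromK : ∀ u ∈ ws, Relation.ReflTransGen (fun x y => (x, y) ∈ q.2) k u := by
      intro u hu
      exact Relation.ReflTransGen.mono (fun x y => monoL x y) _ _ (head_reaches (ws ++ [l]) k u (by simp [hu]))
    intro u hu w hw
    rw [h1] at hu hw
    have hul : u ∈ p.1 ∨ Relation.ReflTransGen (fun x y => (x, y) ∈ q.2) u l := by
      rcases hu with hu | hu
      · exact Or.inl hu
      · exact Or.inr (toL u hu)
    rcases hw with hw | hw
    · rcases hul with hu' | hu'
      · exact reachP u hu' w hw
      · exact hu'.trans (reachP l hl w hw)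
    · have : Relation.ReflTransGen (fun x y => (x, y) ∈ q.2) u k := by
        rcases hul with hu' | hu'
        · exact reachP u hu' k hk
        · exact hu'.trans (reachP l hl k hk)
      exact this.trans (fromK w hw)

lemma invF_trivialStep {E : V → V → Prop} {p q : Set V × Set (V × V)}
    (hp : InvF E p) (h : IsTrivialEarStep E p q) : InvF E q := by
  obtain ⟨k, l, hk, hl, hkl, hnotin, h1, h2⟩ := h
  constructor
  · intro e he
    rw [h2] at he
    rcases he with he | he
    · exact hp.1 e he
    · rcases he with rfl; exact hkl
  · intro u hu w hw
    rw [h1] at hu hw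
    exact Relation.ReflTransGen.mono (fun x y hxy => by rw [h2]; exact Or.inl hxy) _ _ (hp.2 u hu w hw)

lemma forall_chainPairs_of_chain' {R : V → V → Prop} :
    ∀ {L : List V}, List.Chain' R L → ∀ e ∈ chainPairs L, R e.1 e.2 := by
  intro L
  induction L with
  | nil => intro _ e he; simp [chainPairs] at he
  | cons a L ih =>
    cases L with
    | nil => intro _ e he; simp [chainPairs_singleton] at he
    | cons b L =>
      intro h e he
      have h : List.IsChain R (a :: b :: L) := h
      rw [List.isChain_cons_cons] at h
      rcases mem_chainPairs_cons_cons.1 he with rfl | he'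
      · exact h.1
      · exact ih h.2 e he'

lemma earPath {R : V → V → Prop} (S : Set V) {w : V} (hw : w ∈ S) :
    ∀ u, Relation.ReflTransGen R u w → u ∉ S →
      ∃ (tl : List V) (l : V), (u :: tl).Nodup ∧ (∀ v ∈ u :: tl, v ∉ S) ∧ l ∈ S ∧
        List.Chain' R (u :: tl ++ [l]) := by
  intro u hrtg
  induction hrtg using Relation.ReflTransGen.head_induction_on with
  | refl => intro hu; exact absurd hw hu
  | head hac hcb ih =>
    rename_i a c
    intro ha
    by_cases hc : c ∈ S
    · exact ⟨[], c, by simp, by simpa using ha, hc, List.isChain_pair.2 hac⟩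
    · obtain ⟨tl, l, hnd, hout, hl, hch⟩ := ih hc
      by_cases hmem : a ∈ c :: tl
      · obtain ⟨pre, suf, hsplit⟩ := List.append_of_mem hmem
        refine ⟨suf, l, ?_, ?_, hl, ?_⟩
        · exact List.Nodup.sublist ((List.suffix_append pre (a :: suf)).sublist) (hsplit ▸ hnd)
        · intro v hv
          exact hout v (hsplit ▸ (List.mem_append_right pre hv))
        · have : (a :: suf) ++ [l] <:+ (c :: tl) ++ [l] := by
            rw [hsplit, List.append_assoc]
            exact (List.suffix_append pre ((a :: suf) ++ [l]))
          exact hch.suffix this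
      · refine ⟨c :: tl, l, ?_, ?_, hl, ?_⟩
        · exact List.nodup_cons.2 ⟨hmem, hnd⟩
        · intro v hv
          rcases List.mem_cons.1 hv with rfl | hv'
          · exact ha
          · exact hout v hv'
        · rw [show (a :: (c :: tl) ++ [l]) = a :: ((c :: tl) ++ [l]) by simp]
          exact List.isChain_cons.2 ⟨fun y hy => by simp at hy; rw [← hy]; exact hac, hch⟩

lemma exists_crossing {R : V → V → Prop} {S : Set V} :
    ∀ u w, Relation.ReflTransGen R u w → u ∈ S → w ∉ S →
      ∃ x z, x ∈ S ∧ z ∉ S ∧ R x z := by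
  intro u w h
  induction h using Relation.ReflTransGen.head_induction_on with
  | refl => intro h1 h2; exact absurd h1 h2
  | head hac hcb ih =>
    rename_i a c
    intro ha hw
    by_cases hc : c ∈ S
    · exact ih hc hw
    · exact ⟨a, c, ha, hc, hac⟩

lemma prependStep {E' : V → V → Prop} {p q : Set V × Set (V × V)}
    (hstep : IsEarStep E' p q ∨ IsTrivialEarStep E' p q)
    (h : ∃ (t : ℕ) (P : Fin (t + 1) → Set V × Set (V × V)), P 0 = q ∧
      (∀ i : Fin t, IsEarStep E' (P i.castSucc) (P i.succ) ∨
        IsTrivialEarStep E' (P i.castSucc) (P i.succ)) ∧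
      (P (Fin.last t)).1 = Set.univ ∧ (P (Fin.last t)).2 = {e : V × V | E' e.1 e.2}) :
    ∃ (t : ℕ) (P : Fin (t + 1) → Set V × Set (V × V)), P 0 = p ∧
      (∀ i : Fin t, IsEarStep E' (P i.castSucc) (P i.succ) ∨
        IsTrivialEarStep E' (P i.castSucc) (P i.succ)) ∧
      (P (Fin.last t)).1 = Set.univ ∧ (P (Fin.last t)).2 = {e : V × V | E' e.1 e.2} := by
  obtain ⟨t, P, h0, hs, hf1, hf2⟩ := h
  refine ⟨t + 1, Fin.cons p P, by simp, ?_, ?_, ?_⟩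
  · intro i
    induction i using Fin.cases with
    | zero =>
      rw [show ((0 : Fin (t + 1)).castSucc) = 0 by simp, Fin.cons_zero,
        show ((0 : Fin (t + 1)).succ) = (Fin.succ 0) by rfl, Fin.cons_succ, h0]
      exact hstep
    | succ j =>
      rw [← Fin.succ_castSucc, Fin.cons_succ, Fin.cons_succ]
      exact hs j
  · rw [← Fin.succ_last, Fin.cons_succ]; exact hf1
  · rw [← Fin.succ_last, Fin.cons_succ]; exact hf2

lemma buildDecomp [Fintype V] {E' : V → V → Prop}
    (hsc' : ∀ u w : V, Relation.ReflTransGen E' u w) :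
    ∀ (n : ℕ) (p : Set V × Set (V × V)),
      p.1ᶜ.ncard + ({e : V × V | E' e.1 e.2} \ p.2).ncard ≤ n →
      p.1.Nonempty → (∀ e ∈ p.2, E' e.1 e.2) →
      ∃ (t : ℕ) (P : Fin (t + 1) → Set V × Set (V × V)), P 0 = p ∧
        (∀ i : Fin t, IsEarStep E' (P i.castSucc) (P i.succ) ∨
          IsTrivialEarStep E' (P i.castSucc) (P i.succ)) ∧
        (P (Fin.last t)).1 = Set.univ ∧ (P (Fin.last t)).2 = {e : V × V | E' e.1 e.2} := by
  intro n
  induction n with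
  | zero =>
    intro p hn hne hsub
    have h1 : p.1 = Set.univ := by
      by_contra h
      have h' : p.1ᶜ.Nonempty := Set.nonempty_compl.2 h
      have := (Set.ncard_pos (Set.toFinite _)).2 h'
      omega
    have h2 : p.2 = {e : V × V | E' e.1 e.2} := by
      refine Set.Subset.antisymm (fun e he => hsub e he) ?_
      intro e he
      by_contra hcon
      have h' : ({e : V × V | E' e.1 e.2} \ p.2).Nonempty := ⟨e, he, hcon⟩
      have := (Set.ncard_pos (Set.toFinite _)).2 h'
      omega
    exact ⟨0, fun _ => p, rfl, fun i => i.elim0, h1, h2⟩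
  | succ n ih =>
    intro p hn hne hsub
    by_cases h1 : p.1 = Set.univ
    · by_cases h2 : {e : V × V | E' e.1 e.2} ⊆ p.2
      · exact ⟨0, fun _ => p, rfl, fun i => i.elim0, h1,
          Set.Subset.antisymm (fun e he => hsub e he) h2⟩
      · obtain ⟨e, he, hen⟩ := Set.not_subset.1 h2
        set q : Set V × Set (V × V) := (p.1, p.2 ∪ {e}) with hq
        have hstep : IsTrivialEarStep E' p q := by
          refine ⟨e.1, e.2, by rw [h1]; trivial, by rw [h1]; trivial, he, ?_, rfl, ?_⟩
          · rwa [Prod.mk.eta]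
          · rw [hq]
        have hmono : ({e' : V × V | E' e'.1 e'.2} \ q.2) ⊂ ({e' : V × V | E' e'.1 e'.2} \ p.2) := by
          constructor
          · intro x hx
            exact ⟨hx.1, fun hxp => hx.2 (Or.inl hxp)⟩
          · intro hcon
            have := hcon ⟨he, hen⟩
            exact this.2 (Or.inr rfl)
        have hlt := Set.ncard_lt_ncard hmono (Set.toFinite _)
        refine prependStep (Or.inr hstep) (ih q ?_ hne ?_)
        · have hq1 : q.1ᶜ.ncard = p.1ᶜ.ncard := rfl
          omega
        · intro e' he'
          rcases he' with he' | he'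
          · exact hsub e' he'
          · rcases he'; exact he
    · obtain ⟨y, hy⟩ : ∃ y, y ∉ p.1 := by
        by_contra hcon
        push_neg at hcon
        exact h1 (Set.eq_univ_iff_forall.2 hcon)
      obtain ⟨r, hr⟩ := hne
      obtain ⟨x, z, hx, hz, hxz⟩ := exists_crossing r y (hsc' r y) hr hy
      obtain ⟨tl, l, hnd, hout, hl, hch⟩ := earPath p.1 hr z (hsc' z r) hz
      set ws : List V := z :: tl with hws
      set q : Set V × Set (V × V) :=
        (p.1 ∪ {v | v ∈ ws}, p.2 ∪ chainPairs (x :: ws ++ [l])) with hq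
      have hchainE : ∀ e ∈ chainPairs (x :: ws ++ [l]), E' e.1 e.2 := by
        apply forall_chainPairs_of_chain'
        rw [show (x :: ws ++ [l]) = x :: (ws ++ [l]) by simp]
        refine List.isChain_cons.2 ⟨?_, hch⟩
        intro b hb
        rw [hws] at hb
        simp at hb
        rw [← hb]
        exact hxz
      have hstep : IsEarStep E' p q :=
        ⟨x, l, ws, by simp [hws], hnd, hx, hl, hout, hchainE, rfl, rfl⟩
      have hsub1 : p.1 ⊆ q.1 := fun v hv => Or.inl hv
      have hmono : q.1ᶜ ⊂ p.1ᶜ := by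
        constructor
        · exact Set.compl_subset_compl.2 hsub1
        · intro hcon
          have hzin : z ∈ p.1ᶜ := hz
          have := hcon hzin
          exact this (Or.inr (by simp [hws]))
      have hlt := Set.ncard_lt_ncard hmono (Set.toFinite _)
      have hle : ({e' : V × V | E' e'.1 e'.2} \ q.2).ncard ≤
          ({e' : V × V | E' e'.1 e'.2} \ p.2).ncard := by
        refine Set.ncard_le_ncard ?_ (Set.toFinite _)
        intro e' he'
        exact ⟨he'.1, fun hxp => he'.2 (Or.inl hxp)⟩
      refine prependStep (Or.inl hstep) (ih q (by omega) ⟨r, Or.inl hr⟩ ?_)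
      intro e' he'
      rcases he' with he' | he'
      · exact hsub e' he'
      · exact hchainE e' he'

lemma isEarStep_mono {E₁ E₂ : V → V → Prop} (h : ∀ x y, E₁ x y → E₂ x y)
    {p q : Set V × Set (V × V)} : IsEarStep E₁ p q → IsEarStep E₂ p q := by
  rintro ⟨k, l, ws, a1, a2, a3, a4, a5, a6, a7, a8⟩
  exact ⟨k, l, ws, a1, a2, a3, a4, a5, fun e he => h _ _ (a6 e he), a7, a8⟩

lemma isTrivialEarStep_mono {E₁ E₂ : V → V → Prop} (h : ∀ x y, E₁ x y → E₂ x y)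
    {p q : Set V × Set (V × V)} : IsTrivialEarStep E₁ p q → IsTrivialEarStep E₂ p q := by
  rintro ⟨k, l, a1, a2, a3, a4, a5, a6⟩
  exact ⟨k, l, a1, a2, h _ _ a3, a4, a5, a6⟩

lemma isCycleAt_mono {E₁ E₂ : V → V → Prop} (h : ∀ x y, E₁ x y → E₂ x y)
    {r : V} {p : Set V × Set (V × V)} : IsCycleAt E₁ r p → IsCycleAt E₂ r p := by
  rintro ⟨vs, a1, a2, a3, a4, a5⟩
  exact ⟨vs, a1, a2, fun e he => h _ _ (a3 e he), a4, a5⟩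


/-- A strongly connected directed simple graph `G` on a
finite vertex type with at least two vertices is minimally strongly connected
if and only if in every ear decomposition of `G` (starting from a directed
cycle, each step adding a nontrivial or a trivial ear, and ending with all of
`G`) every step adds a nontrivial ear. -/
theorem minimallyStronglyConnected_iff_no_trivial_ears [Fintype V]
    (E : V → V → Prop) (hirr : ∀ u, ¬ E u u)
    (hcard : 2 ≤ Fintype.card V)
    (hsc : ∀ u w : V, Relation.ReflTransGen E u w) :
    (∀ a b, E a b →
      ¬ (∀ u w : V, Relation.ReflTransGen
          (fun x y => E x y ∧ ¬(x = a ∧ y = b)) u w))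
    ↔
    (∀ (t : ℕ) (P : Fin (t + 1) → Set V × Set (V × V)),
      (∃ r : V, IsCycleAt E r (P 0)) →
      (∀ i : Fin t, IsEarStep E (P i.castSucc) (P i.succ) ∨
        IsTrivialEarStep E (P i.castSucc) (P i.succ)) →
      (P (Fin.last t)).1 = Set.univ →
      (P (Fin.last t)).2 = {e : V × V | E e.1 e.2} →
      ∀ i : Fin t, IsEarStep E (P i.castSucc) (P i.succ)) := by
  constructor
  · -- minimal → no trivial ears
    intro hmin t P h0 hsteps hf1 hf2 i
    have hinv : ∀ j : Fin (t + 1), InvF E (P j) := by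
      intro j
      induction j using Fin.induction with
      | zero => obtain ⟨r, hc⟩ := h0; exact invF_of_cycle hc
      | succ j ihj =>
        rcases hsteps j with h | h
        · exact invF_earStep ihj h
        · exact invF_trivialStep ihj h
    rcases hsteps i with h | h
    · exact h
    · exfalso
      obtain ⟨k, l, hk, hl, hkl, hnotin, h1, h2⟩ := h
      apply hmin k l hkl
      have hklpath : Relation.ReflTransGen (fun x y => E x y ∧ ¬(x = k ∧ y = l)) k l := by
        refine Relation.ReflTransGen.mono ?_ _ _ ((hinv i.castSucc).2 k hk l hl)
        intro x y hxy
        refine ⟨(hinv i.castSucc).1 _ hxy, ?_⟩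
        rintro ⟨rfl, rfl⟩
        exact hnotin hxy
      intro u w
      have hp := hsc u w
      induction hp with
      | refl => exact Relation.ReflTransGen.refl
      | tail hab hbc ihs =>
        rename_i b c
        by_cases hbc' : b = k ∧ c = l
        · obtain ⟨rfl, rfl⟩ := hbc'
          exact ihs.trans hklpath
        · exact ihs.tail ⟨hbc, hbc'⟩
  · -- no trivial ears → minimal
    intro hR a b hab hconn
    -- build a cycle for the reduced graph E'
    obtain ⟨r0, y0, hry⟩ := Fintype.exists_pair_of_one_lt_card (α := V) (by omega)
    have hEsub : ∀ x y, (fun x y => E x y ∧ ¬(x = a ∧ y = b)) x y → E x y := fun x y h => h.1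
    rcases (hconn r0 y0).cases_head with heq | ⟨z, hrz, _⟩
    · exact hry heq
    have hzr : z ∉ ({r0} : Set V) := by
      intro hz
      rw [Set.mem_singleton_iff] at hz
      subst hz
      exact hirr _ hrz.1
    obtain ⟨tl, l, hnd, hout, hl, hch⟩ := earPath ({r0} : Set V) rfl z (hconn z r0) hzr
    rw [Set.mem_singleton_iff] at hl
    rw [hl] at hch
    set E' : V → V → Prop := fun x y => E x y ∧ ¬(x = a ∧ y = b) with hE'
    set p₀ : Set V × Set (V × V) :=
      ({x | x ∈ r0 :: z :: tl}, chainPairs (r0 :: (z :: tl) ++ [r0])) with hp₀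
    have hcycE : ∀ e ∈ chainPairs (r0 :: (z :: tl) ++ [r0]), E' e.1 e.2 := by
      apply forall_chainPairs_of_chain'
      refine List.isChain_cons.2 ⟨?_, hch⟩
      intro y hy
      simp at hy
      rw [← hy]
      exact hrz
    have hr0nmem : r0 ∉ z :: tl := fun hmem => hout r0 hmem rfl
    have hcyc : IsCycleAt E' r0 p₀ :=
      ⟨z :: tl, by simp, List.nodup_cons.2 ⟨hr0nmem, hnd⟩, hcycE, rfl, rfl⟩
    obtain ⟨t, P, hP0, hPs, hPf1, hPf2⟩ :=
      buildDecomp hconn (p₀.1ᶜ.ncard + ({e : V × V | E' e.1 e.2} \ p₀.2).ncard) p₀ le_rfl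
        ⟨r0, List.mem_cons_self⟩ (fun e he => hcycE e he)
    -- extend by the trivial ear (a, b)
    set P' : Fin (t + 1 + 1) → Set V × Set (V × V) :=
      Fin.snoc P (Set.univ, {e : V × V | E e.1 e.2}) with hP'
    have hP'0 : P' 0 = P 0 := by
      rw [hP', show (0 : Fin (t + 1 + 1)) = (0 : Fin (t + 1)).castSucc by simp,
        Fin.snoc_castSucc]
    have hP'last : P' (Fin.last (t + 1)) = (Set.univ, {e : V × V | E e.1 e.2}) := by
      rw [hP', Fin.snoc_last]
    have hC : ∃ r : V, IsCycleAt E r (P' 0) := by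
      rw [hP'0, hP0]
      exact ⟨r0, isCycleAt_mono hEsub hcyc⟩
    have hfull : {e : V × V | E e.1 e.2} = {e : V × V | E' e.1 e.2} ∪ {(a, b)} := by
      ext ⟨x, y⟩
      simp only [Set.mem_setOf_eq, Set.mem_union, Set.mem_singleton_iff, Prod.mk.injEq, hE']
      constructor
      · intro hxy
        by_cases hcase : x = a ∧ y = b
        · exact Or.inr hcase
        · exact Or.inl ⟨hxy, hcase⟩
      · rintro (⟨hxy, _⟩ | ⟨rfl, rfl⟩)
        · exact hxy
        · exact hab
    have hS : ∀ i : Fin (t + 1), IsEarStep E (P' i.castSucc) (P' i.succ) ∨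
        IsTrivialEarStep E (P' i.castSucc) (P' i.succ) := by
      intro i
      induction i using Fin.lastCases with
      | last =>
        rw [hP', Fin.snoc_castSucc, Fin.succ_last, Fin.snoc_last]
        right
        refine ⟨a, b, by rw [hPf1]; trivial, by rw [hPf1]; trivial, hab, ?_, hPf1.symm, ?_⟩
        · rw [hPf2]
          intro hmem
          exact hmem.2 ⟨rfl, rfl⟩
        · rw [hPf2]
          exact hfull
      | cast j =>
        rw [hP', Fin.snoc_castSucc, Fin.succ_castSucc, Fin.snoc_castSucc]
        rcases hPs j with h | h
        · exact Or.inl (isEarStep_mono hEsub h)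
        · exact Or.inr (isTrivialEarStep_mono hEsub h)
    have key := hR (t + 1) P' hC hS (by rw [hP'last]) (by rw [hP'last]) (Fin.last t)
    rw [hP', Fin.snoc_castSucc, Fin.succ_last, Fin.snoc_last] at key
    obtain ⟨k', l', ws, hne, _, _, _, hout', _, _, _⟩ := key
    cases ws with
    | nil => exact hne rfl
    | cons w tl' =>
      have := hout' w (List.mem_cons_self)
      rw [hPf1] at this
      exact this (Set.mem_univ w)
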